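/- (Euler–Jacobi theorem in one variable.) Let f, g ∈ ℂ[X] with f nonconstant, f having nonzero constant term and no repeated complex root, and deg g ≤ deg f − 2. Then the sum over the complex roots α of f of g(α)/f′(α) equals 0, where f′ is the derivative of f (note f′(α) ≠ 0 at every root α since the roots are simple). -/

import Mathlib

open Polynomial

theorem stmt_12 (f g : Polynomial ℂ) (hf : 0 < f.degree)
    (hf0 : f.coeff 0 ≠ 0) (hsimple : f.roots.Nodup)
    (hg : g.degree + 2 ≤ f.degree) :
    ∑ α ∈ f.roots.toFinset, g.eval α / (derivative f).eval α = 0 := by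
  classical
  have hfne : f ≠ 0 := fun h => by simp [h] at hf
  set s := f.roots.toFinset with hsdef
  have hsval : s.val = f.roots := by
    rw [hsdef, Multiset.toFinset_val, hsimple.dedup]
  have hsplits : f.Splits := IsAlgClosed.splits f
  have hcard : s.card = f.natDegree := by
    rw [Finset.card, hsval]
    have := hsplits.natDegree_eq_card_roots
    exact this.symm
  have hN : f = C f.leadingCoeff * Lagrange.nodal s id := by
    have h1 := hsplits.eq_prod_roots
    have h2 : Lagrange.nodal s id = (Multiset.map (fun a => X - C a) f.roots).prod := by
      rw [Lagrange.nodal_eq, Finset.prod, hsval]; simp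
    rw [h2]; exact h1
  have hinj : Set.InjOn (id : ℂ → ℂ) s := Set.injOn_id _
  have hdegf : f.degree = (f.natDegree : WithBot ℕ) := degree_eq_natDegree hfne
  have hn1 : 1 ≤ f.natDegree := natDegree_pos_iff_degree_pos.mpr hf
  have hglt : g.degree < ((s.card - 1 : ℕ) : WithBot ℕ) := by
    rcases eq_or_ne g 0 with rfl | hg0
    · simp only [degree_zero]; exact WithBot.bot_lt_coe _
    · have hgd : g.degree = (g.natDegree : WithBot ℕ) := degree_eq_natDegree hg0
      rw [hgd, hdegf] at hg
      rw [hgd, hcard]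
      have : g.natDegree + 2 ≤ f.natDegree := by exact_mod_cast hg
      exact_mod_cast Nat.lt_of_lt_of_le (Nat.lt_succ_self _) (by omega)
  have hglt' : g.degree < (s.card : WithBot ℕ) := by
    refine lt_of_lt_of_le hglt ?_
    exact_mod_cast Nat.sub_le s.card 1
  have hinterp := Lagrange.eq_interpolate (f := g) hinj hglt'
  -- coefficient of interpolate at s.card - 1
  have hcoeff : (Lagrange.interpolate s id fun i => g.eval (id i)).coeff (s.card - 1) =
      ∑ α ∈ s, Lagrange.nodalWeight s id α * g.eval α := by
    rw [Lagrange.interpolate_eq_nodalWeight_mul_nodal_div_X_sub_C, finset_sum_coeff]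
    refine Finset.sum_congr rfl fun α hα => ?_
    rw [← Lagrange.nodal_erase_eq_nodal_div hα]
    have hmonic : (Lagrange.nodal (s.erase α) id).Monic := Lagrange.nodal_monic
    have hdeg : (Lagrange.nodal (s.erase α) id).natDegree = s.card - 1 := by
      rw [Lagrange.natDegree_nodal, Finset.card_erase_of_mem hα]
    rw [coeff_mul_C, coeff_C_mul, ← hdeg, hmonic.coeff_natDegree]
    simp [mul_comm]
  have hzero : ∑ α ∈ s, Lagrange.nodalWeight s id α * g.eval α = 0 := by
    rw [← hcoeff, ← hinterp]
    exact coeff_eq_zero_of_degree_lt hglt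
  have hderiv : ∀ α ∈ s, (derivative f).eval α =
      f.leadingCoeff * (derivative (Lagrange.nodal s id)).eval α := by
    intro α hα
    conv_lhs => rw [hN]
    rw [derivative_C_mul, eval_mul, eval_C]
  calc ∑ α ∈ s, g.eval α / (derivative f).eval α
      = f.leadingCoeff⁻¹ * ∑ α ∈ s, Lagrange.nodalWeight s id α * g.eval α := by
        rw [Finset.mul_sum]
        refine Finset.sum_congr rfl fun α hα => ?_
        rw [hderiv α hα, Lagrange.nodalWeight_eq_eval_derivative_nodal hα]
        simp only [id]
        rw [div_eq_mul_inv, mul_inv]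
        ring
    _ = 0 := by rw [hzero, mul_zero]
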